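/- Let k ≥ 2 be a real number. Define real polynomials φ_n by φ_1(x) = ((k+2)/4)·x, φ_2(x) = x² − ((3k−6)/4)·x − k, and φ_n(x) = (x − (k−2)/2)·φ_{n−1}(x) − ((k+2)/4)·φ_{n−2}(x) for n ≥ 3, and let D_n(x) = det(x·I_n − M_n), where M_n is the n × n tridiagonal matrix with diagonal entries (k−2)/2, subdiagonal entries (k+2)/4, and superdiagonal entries 1 (with D_0(x) = 1). Then for every integer n ≥ 3 and every real x, φ_n(x) = (x² − ((3k−6)/4)·x − k)·D_{n−2}(x) − ((k+2)/4)²·x·D_{n−3}(x). -/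
import Mathlib

open Polynomial

/-- `D n x = det (x • I − M_n)` where `M_n` is the `n × n` tridiagonal matrix with
diagonal entries `(k−2)/2`, subdiagonal entries `(k+2)/4` and superdiagonal
entries `1`.  In particular `D 0 x = 1`. -/
noncomputable def tridiagCharDet (k : ℝ) (n : ℕ) (x : ℝ) : ℝ :=
  (x • (1 : Matrix (Fin n) (Fin n) ℝ) -
    Matrix.of fun i j : Fin n =>
      if (i : ℕ) = (j : ℕ) then (k - 2) / 2
      else if (i : ℕ) = (j : ℕ) + 1 then (k + 2) / 4
      else if (j : ℕ) = (i : ℕ) + 1 then 1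
      else 0).det

private noncomputable def A (k : ℝ) (n : ℕ) (x : ℝ) : Matrix (Fin n) (Fin n) ℝ :=
  x • (1 : Matrix (Fin n) (Fin n) ℝ) -
    Matrix.of fun i j : Fin n =>
      if (i : ℕ) = (j : ℕ) then (k - 2) / 2
      else if (i : ℕ) = (j : ℕ) + 1 then (k + 2) / 4
      else if (j : ℕ) = (i : ℕ) + 1 then 1
      else 0

private lemma A_apply (k : ℝ) (n : ℕ) (x : ℝ) (i j : Fin n) :
    A k n x i j =
      (if (i : ℕ) = (j : ℕ) then x - (k - 2) / 2
      else if (i : ℕ) = (j : ℕ) + 1 then -((k + 2) / 4)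
      else if (j : ℕ) = (i : ℕ) + 1 then -1
      else 0) := by
  simp only [A, Matrix.sub_apply, Matrix.smul_apply, Matrix.one_apply, Matrix.of_apply,
    smul_eq_mul]
  rcases eq_or_ne (i : ℕ) (j : ℕ) with h | h
  · have : i = j := Fin.ext h
    simp [this, h]
  · have : i ≠ j := fun hc => h (by rw [hc])
    simp only [this, h, if_neg, if_false, mul_zero, zero_sub]
    split_ifs <;> ring

private lemma tridiag_eq_A (k : ℝ) (n : ℕ) (x : ℝ) :
    tridiagCharDet k n x = (A k n x).det := rfl

private lemma D_zero (k x : ℝ) : tridiagCharDet k 0 x = 1 := Matrix.det_fin_zero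

private lemma D_one (k x : ℝ) : tridiagCharDet k 1 x = x - (k - 2) / 2 := by
  rw [tridiag_eq_A, Matrix.det_fin_one, A_apply]
  norm_num

private lemma subm1 (k : ℝ) (n : ℕ) (x : ℝ) :
    (A k (n+2) x).submatrix Fin.succ ((0 : Fin (n+2)).succAbove) = A k (n+1) x := by
  ext i j
  simp [Matrix.submatrix_apply, A_apply, Fin.succAbove, Fin.lt_def]

private lemma subm2 (k : ℝ) (n : ℕ) (x : ℝ) :
    ((A k (n+2) x).submatrix Fin.succ (Fin.succAbove (0 : Fin (n+1)).succ)).submatrix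
      ((0 : Fin (n+1)).succAbove) Fin.succ = A k n x := by
  ext i j
  simp [Matrix.submatrix_apply, A_apply, Fin.succAbove, Fin.lt_def]

private lemma D_rec (k x : ℝ) (n : ℕ) :
    tridiagCharDet k (n + 2) x =
      (x - (k - 2) / 2) * tridiagCharDet k (n + 1) x
        - (k + 2) / 4 * tridiagCharDet k n x := by
  rw [tridiag_eq_A, tridiag_eq_A, tridiag_eq_A]
  rw [show (n + 2) = (n+1).succ from rfl, Matrix.det_succ_row_zero,
    Fin.sum_univ_succ, Fin.sum_univ_succ]
  have htail : ∀ j : Fin n, (-1 : ℝ) ^ ((j.succ.succ : Fin (n+2)) : ℕ)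
      * A k (n+2) x 0 j.succ.succ
      * ((A k (n+2) x).submatrix Fin.succ (Fin.succAbove j.succ.succ)).det = 0 := by
    intro j
    have : A k (n+2) x 0 j.succ.succ = 0 := by
      rw [A_apply]; simp
    rw [this]; ring
  rw [Finset.sum_eq_zero fun j _ => htail j, add_zero]
  have h00 : A k (n+2) x 0 0 = x - (k - 2) / 2 := by rw [A_apply]; simp
  have h01 : A k (n+2) x 0 (0 : Fin (n+1)).succ = -1 := by rw [A_apply]; simp
  rw [h00, h01, subm1]
  have hB : ((A k (n+2) x).submatrix Fin.succ (Fin.succAbove (0 : Fin (n+1)).succ)).det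
      = -((k + 2) / 4) * (A k n x).det := by
    rw [Matrix.det_succ_column_zero, Fin.sum_univ_succ]
    have htail2 : ∀ i : Fin n, (-1:ℝ) ^ ((i.succ : Fin (n+1)) : ℕ)
        * ((A k (n+2) x).submatrix Fin.succ (Fin.succAbove (0 : Fin (n+1)).succ)) i.succ 0
        * (((A k (n+2) x).submatrix Fin.succ (Fin.succAbove (0 : Fin (n+1)).succ)).submatrix
            i.succ.succAbove Fin.succ).det = 0 := by
      intro i
      have : ((A k (n+2) x).submatrix Fin.succ
          (Fin.succAbove (0 : Fin (n+1)).succ)) i.succ 0 = 0 := by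
        simp [Matrix.submatrix_apply, A_apply, Fin.succAbove, Fin.lt_def]
      rw [this]; ring
    rw [Finset.sum_eq_zero fun i _ => htail2 i, add_zero]
    have h10 : ((A k (n+2) x).submatrix Fin.succ (Fin.succAbove (0 : Fin (n+1)).succ)) 0 0
        = -((k + 2) / 4) := by
      simp [Matrix.submatrix_apply, A_apply, Fin.succAbove, Fin.lt_def]
    rw [h10, subm2 k n x]
    simp
  rw [hB]
  simp
  ring

/-- Laplace-expansion identity for the polynomials `φ_n`:
`φ_n(x) = (x² − ((3k−6)/4)x − k) D_{n−2}(x) − ((k+2)/4)² x D_{n−3}(x)`. -/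
theorem phi_eq_det_expansion (k : ℝ) (hk : 2 ≤ k) (φ : ℕ → ℝ → ℝ)
    (h1 : ∀ x : ℝ, φ 1 x = (k + 2) / 4 * x)
    (h2 : ∀ x : ℝ, φ 2 x = x ^ 2 - (3 * k - 6) / 4 * x - k)
    (hrec : ∀ n : ℕ, 3 ≤ n → ∀ x : ℝ,
      φ n x = (x - (k - 2) / 2) * φ (n - 1) x - (k + 2) / 4 * φ (n - 2) x)
    (n : ℕ) (hn : 3 ≤ n) (x : ℝ) :
    φ n x = (x ^ 2 - (3 * k - 6) / 4 * x - k) * tridiagCharDet k (n - 2) x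
      - ((k + 2) / 4) ^ 2 * x * tridiagCharDet k (n - 3) x := by
  set q : ℝ := x ^ 2 - (3 * k - 6) / 4 * x - k with hq
  have key : ∀ m : ℕ,
      (φ (m + 3) x = q * tridiagCharDet k (m + 1) x
        - ((k + 2) / 4) ^ 2 * x * tridiagCharDet k m x) ∧
      (φ (m + 4) x = q * tridiagCharDet k (m + 2) x
        - ((k + 2) / 4) ^ 2 * x * tridiagCharDet k (m + 1) x) := by
    intro m
    induction m with
    | zero =>
      constructor
      · have h3 := hrec 3 (by norm_num) x
        norm_num at h3
        rw [h3, h1, h2, D_one, D_zero, hq]; ring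
      · have h3 := hrec 3 (by norm_num) x
        have h4 := hrec 4 (by norm_num) x
        norm_num at h3 h4
        rw [h4, h3, h1, h2, D_rec k x 0, D_one, D_zero, hq]; ring
    | succ m ih =>
      obtain ⟨ihm, ihm1⟩ := ih
      refine ⟨by simpa using ihm1, ?_⟩
      have h5 := hrec (m + 5) (by omega) x
      have e1 : m + 5 - 1 = m + 4 := by omega
      have e2 : m + 5 - 2 = m + 3 := by omega
      rw [e1, e2] at h5
      have : (m + 1) + 4 = m + 5 := by omega
      rw [this, h5, ihm1, ihm, show (m+1)+2 = (m+1)+2 from rfl,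
        show m + 3 = (m+1)+2 from by omega, D_rec k x (m+1), D_rec k x m]
      ring
  obtain ⟨m, rfl⟩ : ∃ m, n = m + 3 := ⟨n - 3, by omega⟩
  have e1 : m + 3 - 2 = m + 1 := by omega
  have e2 : m + 3 - 3 = m := by omega
  rw [e1, e2]
  exact (key m).1
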